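/- Let K be a bounded linear operator on H and let Λ = (Λ_i)_{i∈I} be a g-sequence. Then Λ is a K-g-frame for H if and only if Λ is a Bessel g-sequence and Range(K) ⊆ Range(T_Λ), where T_Λ is the synthesis operator of Λ. -/

import Mathlib

open ContinuousLinearMap

noncomputable section

variable {I : Type*} {H : Type*} [NormedAddCommGroup H] [InnerProductSpace ℂ H] [CompleteSpace H]
  {G : I → Type*} [∀ i, NormedAddCommGroup (G i)] [∀ i, InnerProductSpace ℂ (G i)]
  [∀ i, CompleteSpace (G i)]

/-- `Λ` is a Bessel g-sequence: for some `B > 0`, `∑ᵢ ‖Λᵢ f‖² ≤ B ‖f‖²` for all `f`. -/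
def IsGBessel (Λ : ∀ i, H →L[ℂ] G i) : Prop :=
  ∃ B : ℝ, 0 < B ∧ ∀ f : H,
    Summable (fun i => ‖Λ i f‖ ^ 2) ∧ (∑' i, ‖Λ i f‖ ^ 2) ≤ B * ‖f‖ ^ 2

/-- `Λ` is a `K`-g-frame: for some `A, B > 0`,
`A ‖K* f‖² ≤ ∑ᵢ ‖Λᵢ f‖² ≤ B ‖f‖²` for all `f`. -/
def IsKgFrame (K : H →L[ℂ] H) (Λ : ∀ i, H →L[ℂ] G i) : Prop :=
  ∃ A B : ℝ, 0 < A ∧ 0 < B ∧ ∀ f : H,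
    Summable (fun i => ‖Λ i f‖ ^ 2) ∧
    A * ‖ContinuousLinearMap.adjoint K f‖ ^ 2 ≤ (∑' i, ‖Λ i f‖ ^ 2) ∧
    (∑' i, ‖Λ i f‖ ^ 2) ≤ B * ‖f‖ ^ 2

/-- `T : (⊕ᵢ Hᵢ)_{ℓ²} → H` is the synthesis operator of `Λ`, characterized by its adjoint
(the analysis operator) satisfying `(T* f)ᵢ = Λᵢ f` for all `f`. -/
def IsSynthesis (Λ : ∀ i, H →L[ℂ] G i) (T : lp G 2 →L[ℂ] H) : Prop :=
  ∀ (f : H) (i : I), (ContinuousLinearMap.adjoint T f : ∀ i, G i) i = Λ i f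

/-- `Γ` is a `K`-dual (Bessel g-sequence) of `Λ`: `K f = ∑ᵢ Λᵢ* (Γᵢ f)` for all `f`,
the sum converging in `H`. -/
def IsKDual (K : H →L[ℂ] H) (Λ Γ : ∀ i, H →L[ℂ] G i) : Prop :=
  ∀ f : H, HasSum (fun i => ContinuousLinearMap.adjoint (Λ i) (Γ i f)) (K f)

section Aux

open scoped ComplexConjugate

local notation "⟪" x ", " y "⟫" => @inner ℂ _ _ x y

lemma lp_norm_sq_eq_tsum (f : lp G 2) : ‖f‖ ^ 2 = ∑' i, ‖f i‖ ^ 2 := by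
  have hp : 0 < (2 : ENNReal).toReal := by norm_num
  have := lp.norm_rpow_eq_tsum hp f
  calc ‖f‖ ^ 2 = ‖f‖ ^ (2 : ENNReal).toReal := by norm_cast
    _ = ∑' i, ‖f i‖ ^ (2 : ENNReal).toReal := this
    _ = ∑' i, ‖f i‖ ^ 2 := by norm_cast

lemma lp_summable_norm_sq (f : lp G 2) : Summable fun i => ‖f i‖ ^ 2 := by
  have hp : 0 < (2 : ENNReal).toReal := by norm_num
  have h := (memℓp_gen_iff hp).1 (lp.memℓp f)
  refine h.congr fun i => ?_
  rw [show (2 : ENNReal).toReal = ((2 : ℕ) : ℝ) by norm_num, Real.rpow_natCast]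

/-- A Bessel g-sequence has a bounded analysis operator. -/
lemma exists_analysis {Λ : ∀ i, H →L[ℂ] G i} (hΛ : IsGBessel Λ) :
    ∃ A : H →L[ℂ] lp G 2, ∀ (f : H) (i : I), (A f : ∀ i, G i) i = Λ i f := by
  obtain ⟨B, hB, h⟩ := hΛ
  have hmem : ∀ f : H, Memℓp (fun i => Λ i f) 2 := by
    intro f
    apply memℓp_gen
    have := (h f).1
    convert this using 2 with i
    have : (2 : ENNReal).toReal = ((2 : ℕ) : ℝ) := by norm_num
    rw [this, Real.rpow_natCast]
  let A₀ : H →ₗ[ℂ] lp G 2 :=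
    { toFun := fun f => ⟨fun i => Λ i f, hmem f⟩
      map_add' := by intro x y; ext i; simp; rfl
      map_smul' := by intro c x; ext i; simp }
  have hbound : ∀ f : H, ‖A₀ f‖ ≤ Real.sqrt B * ‖f‖ := by
    intro f
    have h1 : ‖A₀ f‖ ^ 2 = ∑' i, ‖Λ i f‖ ^ 2 := lp_norm_sq_eq_tsum _
    have h2 : ‖A₀ f‖ ^ 2 ≤ B * ‖f‖ ^ 2 := h1 ▸ (h f).2
    have h3 : (Real.sqrt B * ‖f‖) ^ 2 = B * ‖f‖ ^ 2 := by
      rw [mul_pow, Real.sq_sqrt hB.le]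
    have h4 : 0 ≤ Real.sqrt B * ‖f‖ := by positivity
    nlinarith [norm_nonneg (A₀ f)]
  refine ⟨A₀.mkContinuous (Real.sqrt B) hbound, fun f i => rfl⟩

/-- Majorization implies range inclusion (one half of Douglas' theorem). -/
lemma range_subset_of_majorization {E : Type*} [NormedAddCommGroup E]
    [InnerProductSpace ℂ E] [CompleteSpace E] (T : E →L[ℂ] H) (K : H →L[ℂ] H) (c : ℝ)
    (hc : ∀ f : H, ‖adjoint K f‖ ≤ c * ‖adjoint T f‖) :
    Set.range K ⊆ Set.range T := by
  rintro _ ⟨x, rfl⟩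
  -- the functional `f ↦ ⟪K x, f⟫` as a linear map
  set ψ : H →ₗ[ℂ] ℂ := (innerSL ℂ (K x)).toLinearMap with hψ
  set g : H →ₗ[ℂ] E := (adjoint T).toLinearMap with hg
  have hker : LinearMap.ker g ≤ LinearMap.ker ψ := by
    intro f hf
    have hf' : adjoint T f = 0 := hf
    have h1 : ‖adjoint K f‖ ≤ c * ‖adjoint T f‖ := hc f
    rw [hf', norm_zero, mul_zero] at h1
    have h2 : adjoint K f = 0 := norm_le_zero_iff.1 h1
    have : ψ f = ⟪x, adjoint K f⟫ := by
      simp [hψ, innerSL_apply_apply, adjoint_inner_right]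
    simp [LinearMap.mem_ker, this, h2]
  -- the induced functional on the range of `T*`
  set e := g.quotKerEquivRange
  set φ₀ : LinearMap.range g →ₗ[ℂ] ℂ := ((LinearMap.ker g).liftQ ψ hker).comp e.symm.toLinearMap
    with hφ₀
  have hφ₀_apply : ∀ f : H, φ₀ ⟨g f, LinearMap.mem_range_self g f⟩ = ψ f := by
    intro f
    have h1 : e (Submodule.Quotient.mk f) = ⟨g f, LinearMap.mem_range_self g f⟩ :=
      Subtype.ext (g.quotKerEquivRange_apply_mk f)
    have h2 : e.symm ⟨g f, LinearMap.mem_range_self g f⟩ = Submodule.Quotient.mk f := by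
      rw [← h1, LinearEquiv.symm_apply_apply]
    simp [hφ₀, h2, Submodule.liftQ_apply]
  have hφ₀_bound : ∀ v : LinearMap.range g, ‖φ₀ v‖ ≤ (c * ‖x‖) * ‖v‖ := by
    rintro ⟨v, f, rfl⟩
    rw [hφ₀_apply f]
    have h1 : ψ f = ⟪x, adjoint K f⟫ := by
      simp [hψ, innerSL_apply_apply, adjoint_inner_right]
    have h2 : ‖ψ f‖ ≤ ‖x‖ * ‖adjoint K f‖ := by
      rw [h1]; exact norm_inner_le_norm _ _
    have h3 : ‖x‖ * ‖adjoint K f‖ ≤ ‖x‖ * (c * ‖adjoint T f‖) :=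
      mul_le_mul_of_nonneg_left (hc f) (norm_nonneg x)
    have h4 : ‖(⟨g f, LinearMap.mem_range_self g f⟩ : LinearMap.range g)‖ = ‖adjoint T f‖ := rfl
    rw [h4]; nlinarith
  set φ : LinearMap.range g →L[ℂ] ℂ := φ₀.mkContinuous (c * ‖x‖) hφ₀_bound with hφ
  obtain ⟨Φ, hΦ, -⟩ := exists_extension_norm_eq (LinearMap.range g) φ
  set u : E := (InnerProductSpace.toDual ℂ E).symm Φ with hu
  refine ⟨u, ?_⟩
  refine ext_inner_right ℂ fun f => ?_
  calc ⟪T u, f⟫ = ⟪u, adjoint T f⟫ := (adjoint_inner_right T u f).symm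
    _ = Φ (adjoint T f) := by rw [hu, InnerProductSpace.toDual_symm_apply]
    _ = φ ⟨g f, LinearMap.mem_range_self g f⟩ := hΦ ⟨g f, LinearMap.mem_range_self g f⟩
    _ = ψ f := hφ₀_apply f
    _ = ⟪K x, f⟫ := rfl

/-- Range inclusion implies majorization (the other half of Douglas' theorem). -/
lemma majorization_of_range_subset {E : Type*} [NormedAddCommGroup E]
    [InnerProductSpace ℂ E] [CompleteSpace E] (T : E →L[ℂ] H) (K : H →L[ℂ] H)
    (h : Set.range K ⊆ Set.range T) :
    ∃ c : ℝ, 0 < c ∧ ∀ f : H, ‖adjoint K f‖ ≤ c * ‖adjoint T f‖ := by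
  set N : Submodule ℂ E := LinearMap.ker (T : E →ₗ[ℂ] H) with hN
  have hNclosed : IsClosed (N : Set E) := isClosed_ker T
  haveI : CompleteSpace N := hNclosed.completeSpace_coe
  set M : Submodule ℂ E := Nᗮ with hM
  haveI : CompleteSpace M := (Submodule.isClosed_orthogonal N).completeSpace_coe
  have hexu : ∀ x : H, ∃ m : M, T m = K x := by
    intro x
    obtain ⟨u, hu⟩ := h (Set.mem_range_self x)
    refine ⟨Submodule.orthogonalProjectionOnto M u, ?_⟩
    have hmem : u - ↑(Submodule.orthogonalProjectionOnto M u) ∈ Mᗮ :=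
      Submodule.sub_starProjection_mem_orthogonal u
    have hmem' : u - ↑(Submodule.orthogonalProjectionOnto M u) ∈ N := by
      have h5 : Mᗮ = N := by rw [hM]; exact Submodule.orthogonal_orthogonal N
      exact h5.le hmem
    have h0 : T (u - ↑(Submodule.orthogonalProjectionOnto M u)) = 0 := hmem'
    have h2 : T u - T ↑(Submodule.orthogonalProjectionOnto M u) = 0 := by
      rw [← map_sub]; exact h0
    have h3 : T ↑(Submodule.orthogonalProjectionOnto M u) = T u := by
      have := sub_eq_zero.1 h2
      exact this.symm
    rw [h3, hu]
  have huniq : ∀ (x : H) (m m' : M), T m = K x → T m' = K x → m = m' := by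
    intro x m m' hm hm'
    have hsub : ((m : E) - (m' : E)) ∈ N := by
      rw [hN, LinearMap.mem_ker, map_sub, ContinuousLinearMap.coe_coe, hm, hm', sub_self]
    have hsubM : ((m : E) - (m' : E)) ∈ M := M.sub_mem m.2 m'.2
    have : ((m : E) - (m' : E)) = 0 := by
      have := (Submodule.mem_orthogonal N ((m : E) - (m' : E))).1 hsubM _ hsub
      simpa [inner_self_eq_zero] using this
    have : (m : E) = (m' : E) := by rwa [sub_eq_zero] at this
    exact Subtype.ext this
  have hex : ∀ x : H, ∃ m : M, T m = K x := hexu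
  set C₀ : H → M := fun x => (hex x).choose with hC₀
  have hC₀spec : ∀ x : H, T (C₀ x) = K x := fun x => (hex x).choose_spec
  set Clm : H →ₗ[ℂ] M :=
    { toFun := C₀
      map_add' := by
        intro x y
        refine huniq (x + y) _ _ (hC₀spec (x + y)) ?_
        push_cast
        rw [map_add, hC₀spec x, hC₀spec y, map_add]
      map_smul' := by
        intro a x
        refine huniq (a • x) _ _ (hC₀spec (a • x)) ?_
        push_cast
        rw [map_smul, hC₀spec x, map_smul]
        rfl } with hClm
  have hcont : Continuous Clm := by
    apply LinearMap.continuous_of_seq_closed_graph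
    intro u x y hux huy
    refine huniq x y (C₀ x) ?_ (hC₀spec x)
    have h1 : Filter.Tendsto (fun n => T ((Clm (u n) : E))) Filter.atTop (nhds (T (y : E))) :=
      ((T.continuous.comp continuous_subtype_val).tendsto y).comp huy
    have h2 : ∀ n, T ((Clm (u n) : E)) = K (u n) := fun n => hC₀spec (u n)
    have h3 : Filter.Tendsto (fun n => K (u n)) Filter.atTop (nhds (T (y : E))) :=
      h1.congr h2
    have h4 : Filter.Tendsto (fun n => K (u n)) Filter.atTop (nhds (K x)) :=
      (K.continuous.tendsto x).comp hux
    exact tendsto_nhds_unique h3 h4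
  set C : H →L[ℂ] M := ⟨Clm, hcont⟩ with hC
  set D : H →L[ℂ] E := M.subtypeL.comp C with hD
  have hKTD : K = T.comp D := by
    ext x
    exact (hC₀spec x).symm
  refine ⟨‖adjoint D‖ + 1, by positivity, fun f => ?_⟩
  have h1 : adjoint K f = adjoint D (adjoint T f) := by
    rw [hKTD, adjoint_comp]; rfl
  rw [h1]
  calc ‖adjoint D (adjoint T f)‖ ≤ ‖adjoint D‖ * ‖adjoint T f‖ := (adjoint D).le_opNorm _
    _ ≤ (‖adjoint D‖ + 1) * ‖adjoint T f‖ := by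
        apply mul_le_mul_of_nonneg_right (by linarith) (norm_nonneg _)

end Aux

/-- `Λ` is a `K`-g-frame iff `Λ` is a Bessel g-sequence and
`Range(K) ⊆ Range(T_Λ)`, where `T_Λ` is the synthesis operator of `Λ`. -/
theorem isKgFrame_iff_range_subset_range_synthesis
    (K : H →L[ℂ] H) (Λ : ∀ i, H →L[ℂ] G i) :
    IsKgFrame K Λ ↔
      IsGBessel Λ ∧ ∃ T : lp G 2 →L[ℂ] H, IsSynthesis Λ T ∧
        Set.range K ⊆ Set.range T := by
  constructor
  · rintro ⟨A, B, hA, hB, h⟩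
    have hBessel : IsGBessel Λ := ⟨B, hB, fun f => ⟨(h f).1, (h f).2.2⟩⟩
    obtain ⟨An, hAn⟩ := exists_analysis hBessel
    refine ⟨hBessel, adjoint An, ?_, ?_⟩
    · intro f i
      rw [adjoint_adjoint]
      exact hAn f i
    · apply range_subset_of_majorization _ K (Real.sqrt A)⁻¹
      intro f
      have h1 : ‖adjoint (adjoint An) f‖ ^ 2 = ∑' i, ‖Λ i f‖ ^ 2 := by
        rw [adjoint_adjoint, lp_norm_sq_eq_tsum (An f)]
        exact tsum_congr fun i => by rw [hAn f i]
      have h2 : A * ‖adjoint K f‖ ^ 2 ≤ ‖adjoint (adjoint An) f‖ ^ 2 := by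
        rw [h1]; exact (h f).2.1
      have hsA : 0 < Real.sqrt A := Real.sqrt_pos.2 hA
      rw [inv_mul_eq_div, le_div_iff₀ hsA]
      have h3 : ‖adjoint K f‖ * Real.sqrt A =
          Real.sqrt (A * ‖adjoint K f‖ ^ 2) := by
        rw [Real.sqrt_mul hA.le, Real.sqrt_sq (norm_nonneg _), mul_comm]
      rw [h3]
      calc Real.sqrt (A * ‖adjoint K f‖ ^ 2)
          ≤ Real.sqrt (‖adjoint (adjoint An) f‖ ^ 2) := Real.sqrt_le_sqrt h2
        _ = ‖adjoint (adjoint An) f‖ := Real.sqrt_sq (norm_nonneg _)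
  · rintro ⟨⟨B, hBpos, hB⟩, T, hT, hrange⟩
    obtain ⟨c, hc, hmaj⟩ := majorization_of_range_subset T K hrange
    refine ⟨(c ^ 2)⁻¹, B, by positivity, hBpos, fun f => ?_⟩
    refine ⟨(hB f).1, ?_, (hB f).2⟩
    have h1 : ∑' i, ‖Λ i f‖ ^ 2 = ‖adjoint T f‖ ^ 2 := by
      rw [lp_norm_sq_eq_tsum (adjoint T f)]
      exact (tsum_congr fun i => by rw [hT f i]).symm
    rw [h1]
    have h2 := hmaj f
    have h3 : ‖adjoint K f‖ ^ 2 ≤ c ^ 2 * ‖adjoint T f‖ ^ 2 := by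
      nlinarith [norm_nonneg (adjoint K f), norm_nonneg (adjoint T f)]
    rw [inv_mul_le_iff₀ (by positivity)]
    linarith
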